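/- arXiv:1212.3776 — 2 statements merged into one kernel-verified Lean document; each statement's English description precedes it below -/
import Mathlib

section
/- Let E be a compact closed preordered space, let A ⊆ E be a closed decreasing set, B ⊆ E a closed increasing set, and O ⊆ E an open set such that A ∩ B ⊆ O. Then there exist an open decreasing set U ⊇ A and an open increasing set V ⊇ B such that D(U) ∩ I(V) ⊆ O, where D(U) is the smallest closed decreasing set containing U and I(V) is the smallest closed increasing set containing V. -/
/-- The increasing hull `i(S) = {y | ∃ x ∈ S, x ≤ y}`. -/
def incHull {E : Type*} [Preorder E] (S : Set E) : Set E := {y | ∃ x ∈ S, x ≤ y}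

/-- The decreasing hull `d(S) = {y | ∃ x ∈ S, y ≤ x}`. -/
def decHull {E : Type*} [Preorder E] (S : Set E) : Set E := {y | ∃ x ∈ S, y ≤ x}

/-- `I(S)`: the smallest closed increasing set containing `S`. -/
def closedIncHull {E : Type*} [TopologicalSpace E] [Preorder E] (S : Set E) : Set E :=
  ⋂₀ {C : Set E | S ⊆ C ∧ IsClosed C ∧ incHull C = C}

/-- `D(S)`: the smallest closed decreasing set containing `S`. -/
def closedDecHull {E : Type*} [TopologicalSpace E] [Preorder E] (S : Set E) : Set E :=
  ⋂₀ {C : Set E | S ⊆ C ∧ IsClosed C ∧ decHull C = C}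

section
variable {E : Type*} [TopologicalSpace E] [Preorder E] [CompactSpace E]

lemma incHull_incHull (S : Set E) : incHull (incHull S) = incHull S := by
  ext y
  constructor
  · rintro ⟨x, ⟨z, hz, hzx⟩, hxy⟩
    exact ⟨z, hz, hzx.trans hxy⟩
  · intro h
    exact ⟨y, h, le_refl y⟩

lemma decHull_decHull (S : Set E) : decHull (decHull S) = decHull S := by
  ext y
  constructor
  · rintro ⟨x, ⟨z, hz, hxz⟩, hyx⟩
    exact ⟨z, hz, hyx.trans hxz⟩
  · intro h
    exact ⟨y, h, le_refl y⟩

lemma isClosed_incHull (hG : IsClosed {p : E × E | p.1 ≤ p.2})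
    {K : Set E} (hK : IsClosed K) : IsClosed (incHull K) := by
  rw [← isOpen_compl_iff, isOpen_iff_forall_mem_open]
  intro y hy
  have hsub : K ×ˢ ({y} : Set E) ⊆ {p : E × E | p.1 ≤ p.2}ᶜ := by
    rintro ⟨a, b⟩ ⟨ha, hb⟩ hab
    exact hy ⟨a, ha, hb ▸ hab⟩
  obtain ⟨u, v, hu, hv, hKu, hyv, huv⟩ :=
    generalized_tube_lemma hK.isCompact isCompact_singleton hG.isOpen_compl hsub
  refine ⟨v, ?_, hv, hyv rfl⟩
  rintro z hz ⟨x, hx, hxz⟩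
  exact huv (show (x, z) ∈ u ×ˢ v from ⟨hKu hx, hz⟩) hxz

lemma isClosed_decHull (hG : IsClosed {p : E × E | p.1 ≤ p.2})
    {K : Set E} (hK : IsClosed K) : IsClosed (decHull K) := by
  rw [← isOpen_compl_iff, isOpen_iff_forall_mem_open]
  intro y hy
  have hsub : ({y} : Set E) ×ˢ K ⊆ {p : E × E | p.1 ≤ p.2}ᶜ := by
    rintro ⟨a, b⟩ ⟨ha, hb⟩ hab
    exact hy ⟨b, hb, ha ▸ hab⟩
  obtain ⟨u, v, hu, hv, hyu, hKv, huv⟩ :=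
    generalized_tube_lemma isCompact_singleton hK.isCompact hG.isOpen_compl hsub
  refine ⟨u, ?_, hu, hyu rfl⟩
  rintro z hz ⟨x, hx, hzx⟩
  exact huv (show (z, x) ∈ u ×ˢ v from ⟨hz, hKv hx⟩) hzx

/-- Separation with a closed decreasing "buffer": if `F` is closed decreasing, `G` is closed
increasing and they are disjoint, there is an open decreasing `U ⊇ F` contained in a closed
decreasing `C` disjoint from `G`. -/
lemma sep_dec (hG : IsClosed {p : E × E | p.1 ≤ p.2})
    {F G : Set E} (hF : IsClosed F) (hFd : decHull F = F)
    (hGc : IsClosed G) (hGi : incHull G = G)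
    (hdisj : ∀ x, x ∈ F → x ∉ G) :
    ∃ U C : Set E, IsOpen U ∧ decHull U = U ∧ F ⊆ U ∧ U ⊆ C ∧
      IsClosed C ∧ decHull C = C ∧ ∀ x, x ∈ C → x ∉ G := by
  have hsub : G ×ˢ F ⊆ {p : E × E | p.1 ≤ p.2}ᶜ := by
    rintro ⟨g, f⟩ ⟨hg, hf⟩ hgf
    exact hdisj g (hFd ▸ ⟨f, hf, hgf⟩) hg
  obtain ⟨P, Q, hP, hQ, hGP, hFQ, hPQ⟩ :=
    generalized_tube_lemma hGc.isCompact hF.isCompact hG.isOpen_compl hsub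
  refine ⟨(incHull Qᶜ)ᶜ, decHull Pᶜ, (isClosed_incHull hG hQ.isClosed_compl).isOpen_compl,
    ?_, ?_, ?_, isClosed_decHull hG hP.isClosed_compl, decHull_decHull _, ?_⟩
  · ext x
    constructor
    · rintro ⟨z, hz, hxz⟩ ⟨w, hw, hwx⟩
      exact hz ⟨w, hw, hwx.trans hxz⟩
    · intro h
      exact ⟨x, h, le_refl x⟩
  · rintro f hf ⟨z, hz, hzf⟩
    exact hz (hFQ (hFd ▸ ⟨f, hf, hzf⟩))
  · intro x hx
    have hxQ : x ∈ Q := by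
      by_contra h
      exact hx ⟨x, h, le_refl x⟩
    have hxP : x ∉ P := fun h => hPQ (show (x, x) ∈ P ×ˢ Q from ⟨h, hxQ⟩) (le_refl x)
    exact ⟨x, hxP, le_refl x⟩
  · rintro x ⟨z, hz, hxz⟩ hxG
    exact hz (hGP (hGi ▸ ⟨x, hxG, hxz⟩))

/-- Dual version of `sep_dec`. -/
lemma sep_inc (hG : IsClosed {p : E × E | p.1 ≤ p.2})
    {F G : Set E} (hF : IsClosed F) (hFi : incHull F = F)
    (hGc : IsClosed G) (hGd : decHull G = G)
    (hdisj : ∀ x, x ∈ F → x ∉ G) :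
    ∃ V C : Set E, IsOpen V ∧ incHull V = V ∧ F ⊆ V ∧ V ⊆ C ∧
      IsClosed C ∧ incHull C = C ∧ ∀ x, x ∈ C → x ∉ G := by
  have hsub : F ×ˢ G ⊆ {p : E × E | p.1 ≤ p.2}ᶜ := by
    rintro ⟨f, g⟩ ⟨hf, hg⟩ hfg
    exact hdisj g (hFi ▸ ⟨f, hf, hfg⟩) hg
  obtain ⟨Q, P, hQ, hP, hFQ, hGP, hPQ⟩ :=
    generalized_tube_lemma hF.isCompact hGc.isCompact hG.isOpen_compl hsub
  refine ⟨(decHull Qᶜ)ᶜ, incHull Pᶜ, (isClosed_decHull hG hQ.isClosed_compl).isOpen_compl,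
    ?_, ?_, ?_, isClosed_incHull hG hP.isClosed_compl, incHull_incHull _, ?_⟩
  · ext x
    constructor
    · rintro ⟨z, hz, hzx⟩ ⟨w, hw, hxw⟩
      exact hz ⟨w, hw, hzx.trans hxw⟩
    · intro h
      exact ⟨x, h, le_refl x⟩
  · rintro f hf ⟨z, hz, hfz⟩
    exact hz (hFQ (hFi ▸ ⟨f, hf, hfz⟩))
  · intro x hx
    have hxQ : x ∈ Q := by
      by_contra h
      exact hx ⟨x, h, le_refl x⟩
    have hxP : x ∉ P := fun h => hPQ (show (x, x) ∈ Q ×ˢ P from ⟨hxQ, h⟩) (le_refl x)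
    exact ⟨x, hxP, le_refl x⟩
  · rintro x ⟨z, hz, hzx⟩ hxG
    exact hz (hGP (hGd ▸ ⟨x, hxG, hzx⟩))

end

/-- In a compact closed preordered space, given a closed decreasing set `A`, a
closed increasing set `B` and an open set `O` with `A ∩ B ⊆ O`, there are an
open decreasing `U ⊇ A` and an open increasing `V ⊇ B` with `D(U) ∩ I(V) ⊆ O`. -/
theorem compact_closedPreordered_convex_separation {E : Type*} [TopologicalSpace E]
    [Preorder E] [CompactSpace E]
    (hG : IsClosed {p : E × E | p.1 ≤ p.2})
    (A B O : Set E)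
    (hA : IsClosed A) (hAd : decHull A = A)
    (hB : IsClosed B) (hBi : incHull B = B)
    (hO : IsOpen O) (hAB : A ∩ B ⊆ O) :
    ∃ U V : Set E, IsOpen U ∧ decHull U = U ∧ A ⊆ U ∧
      IsOpen V ∧ incHull V = V ∧ B ⊆ V ∧
      closedDecHull U ∩ closedIncHull V ⊆ O := by
  -- Step 1: `G₁ = i(B \ O)` is closed increasing and disjoint from `A`.
  have hG1c : IsClosed (incHull (B ∩ Oᶜ)) :=
    isClosed_incHull hG (hB.inter hO.isClosed_compl)
  have hdisj1 : ∀ x, x ∈ A → x ∉ incHull (B ∩ Oᶜ) := by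
    rintro x hxA ⟨b, ⟨hbB, hbO⟩, hbx⟩
    exact hbO (hAB ⟨hAd ▸ ⟨x, hxA, hbx⟩, hbB⟩)
  obtain ⟨U, A₂, hUopen, hUdec, hAU, hUA₂, hA₂closed, hA₂dec, hA₂disj⟩ :=
    sep_dec hG hA hAd hG1c (incHull_incHull _) hdisj1
  have hA₂B : A₂ ∩ B ⊆ O := by
    rintro x ⟨hxA₂, hxB⟩
    by_contra hxO
    exact hA₂disj x hxA₂ ⟨x, ⟨hxB, hxO⟩, le_refl x⟩
  -- Step 2: `G₂ = d(A₂ \ O)` is closed decreasing and disjoint from `B`.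
  have hG2c : IsClosed (decHull (A₂ ∩ Oᶜ)) :=
    isClosed_decHull hG (hA₂closed.inter hO.isClosed_compl)
  have hdisj2 : ∀ x, x ∈ B → x ∉ decHull (A₂ ∩ Oᶜ) := by
    rintro x hxB ⟨a, ⟨haA₂, haO⟩, hxa⟩
    exact haO (hA₂B ⟨haA₂, hBi ▸ ⟨x, hxB, hxa⟩⟩)
  obtain ⟨V, B₂, hVopen, hVinc, hBV, hVB₂, hB₂closed, hB₂inc, hB₂disj⟩ :=
    sep_inc hG hB hBi hG2c (decHull_decHull _) hdisj2
  have hA₂B₂ : A₂ ∩ B₂ ⊆ O := by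
    rintro x ⟨hxA₂, hxB₂⟩
    by_contra hxO
    exact hB₂disj x hxB₂ ⟨x, ⟨hxA₂, hxO⟩, le_refl x⟩
  refine ⟨U, V, hUopen, hUdec, hAU, hVopen, hVinc, hBV, ?_⟩
  rintro x ⟨hxU, hxV⟩
  have h1 : x ∈ A₂ := hxU _ ⟨hUA₂, hA₂closed, hA₂dec⟩
  have h2 : x ∈ B₂ := hxV _ ⟨hVB₂, hB₂closed, hB₂inc⟩
  exact hA₂B₂ ⟨h1, h2⟩
end

section
/- Let E be a closed preordered k_ω-space, let x ∈ E, and let O be an open convex neighborhood of x. Then there exist an open decreasing set U and an open increasing set V such that x ∈ U ∩ V ⊆ O. -/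
open Topology

/-- A subset `C` is (order) convex if `C = d(C) ∩ i(C)`. -/
def IsOrdConvex {E : Type*} [Preorder E] (C : Set E) : Prop :=
  decHull C ∩ incHull C = C

/-- A `k_ω`-space: there is an increasing sequence of compact sets covering the
space such that a set is open iff its trace on each compact set is open in the
subspace topology. -/
def IsKOmegaSpace (E : Type*) [TopologicalSpace E] : Prop :=
  ∃ K : ℕ → Set E, (∀ n, IsCompact (K n)) ∧ (∀ n, K n ⊆ K (n + 1)) ∧
    (⋃ n, K n) = Set.univ ∧
    ∀ O : Set E, IsOpen O ↔ ∀ n, IsOpen {y : K n | (y : E) ∈ O}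

section Aux
set_option linter.unusedSectionVars false
variable {E : Type*} [TopologicalSpace E] [Preorder E]

lemma incHull_mono {S T : Set E} (h : S ⊆ T) : incHull S ⊆ incHull T := by
  rintro y ⟨z, hz, hzy⟩; exact ⟨z, h hz, hzy⟩

lemma decHull_mono {S T : Set E} (h : S ⊆ T) : decHull S ⊆ decHull T := by
  rintro y ⟨z, hz, hzy⟩; exact ⟨z, h hz, hzy⟩

lemma subset_incHull (S : Set E) : S ⊆ incHull S := fun y hy => ⟨y, hy, le_refl y⟩
lemma subset_decHull (S : Set E) : S ⊆ decHull S := fun y hy => ⟨y, hy, le_refl y⟩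

lemma isCompact_incHull_inter (hG : IsClosed {p : E × E | p.1 ≤ p.2}) {C K : Set E}
    (hC : IsCompact C) (hK : IsCompact K) : IsCompact (incHull C ∩ K) := by
  have h1 : IsCompact ((C ×ˢ K) ∩ {p : E × E | p.1 ≤ p.2}) := (hC.prod hK).inter_right hG
  have h2 := h1.image (continuous_snd)
  convert h2 using 1
  ext y
  constructor
  · rintro ⟨⟨z, hz, hzy⟩, hyK⟩
    exact ⟨(z, y), ⟨⟨hz, hyK⟩, hzy⟩, rfl⟩
  · rintro ⟨⟨z, y'⟩, ⟨⟨hz, hy'⟩, hle⟩, rfl⟩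
    exact ⟨⟨z, hz, hle⟩, hy'⟩

lemma isCompact_decHull_inter (hG : IsClosed {p : E × E | p.1 ≤ p.2}) {C K : Set E}
    (hC : IsCompact C) (hK : IsCompact K) : IsCompact (decHull C ∩ K) := by
  have h1 : IsCompact ((K ×ˢ C) ∩ {p : E × E | p.1 ≤ p.2}) := (hK.prod hC).inter_right hG
  have h2 := h1.image (continuous_fst)
  convert h2 using 1
  ext y
  constructor
  · rintro ⟨⟨z, hz, hzy⟩, hyK⟩
    exact ⟨(y, z), ⟨⟨hyK, hz⟩, hzy⟩, rfl⟩
  · rintro ⟨⟨y', z⟩, ⟨⟨hy', hz⟩, hle⟩, rfl⟩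
    exact ⟨⟨z, hz, hle⟩, hy'⟩

lemma collar_of_tube {GG : Set (E × E)} (hGG : IsClosed GG) (hrefl : ∀ z : E, (z, z) ∈ GG)
    {Kc S W : Set E} (hK : IsCompact Kc) (hS : IsCompact S) (hW : IsOpen W)
    (hyp : ∀ p ∈ S, ∀ q ∈ Kc, q ∉ W → (p, q) ∉ GG) :
    ∃ Θ : Set E, IsOpen Θ ∧ S ⊆ Θ ∧ closure Θ ∩ Kc ⊆ W := by
  have hD : IsCompact (Kc \ W) := hK.diff hW
  have hsub : S ×ˢ (Kc \ W) ⊆ GGᶜ := by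
    rintro ⟨p, q⟩ ⟨hp, hq, hqW⟩
    exact hyp p hp q hq hqW
  obtain ⟨u, v, hu, hv, hSu, hDv, huv⟩ :=
    generalized_tube_lemma hS hD hGG.isOpen_compl hsub
  refine ⟨u, hu, hSu, ?_⟩
  rintro k ⟨hkcl, hkK⟩
  by_contra hkW
  have hkv : k ∈ v := hDv ⟨hkK, hkW⟩
  obtain ⟨z, hzv, hzu⟩ := mem_closure_iff.mp hkcl v hv hkv
  exact huv (Set.mk_mem_prod hzu hzv) (hrefl z)

/-- The "harmless pairs" relation: pairs `(a,b)` such that if `a ≤ b` then both are in `O`.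
By convexity of `O` its complement is exactly the set of pairs admitting a witness of
`Oᶜ` between them. -/
def NRel (O : Set E) : Set (E × E) := {p : E × E | p.1 ≤ p.2 → p.1 ∈ O ∧ p.2 ∈ O}

lemma isOpen_NRel (hG : IsClosed {p : E × E | p.1 ≤ p.2}) {O : Set E} (hO : IsOpen O) :
    IsOpen (NRel O) := by
  have h : NRel O = {p : E × E | p.1 ≤ p.2}ᶜ ∪ (O ×ˢ O) := by
    ext ⟨a, b⟩
    simp only [NRel, Set.mem_setOf_eq, Set.mem_union, Set.mem_compl_iff, Set.mem_prod]
    tauto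
  rw [h]
  exact hG.isOpen_compl.union (hO.prod hO)

/-- Stage invariants. `s = (ΘV, ΘU, ΩV, ΩU)`; `ΘV ∩ A` is the (V-side, increasing) zone,
`ΘU ∩ A` the (U-side, decreasing) zone, `ΩV, ΩU` are open "guards" with no bad pair
between them. -/
def ConvGood (O : Set E) (x : E) (A : Set E) (s : Set E × Set E × Set E × Set E) : Prop :=
  IsOpen s.1 ∧ IsOpen s.2.1 ∧ IsOpen s.2.2.1 ∧ IsOpen s.2.2.2 ∧
  x ∈ s.1 ∧ x ∈ s.2.1 ∧
  (closure (s.1 ∩ A) ∩ A ⊆ s.2.2.1) ∧ (closure (s.2.1 ∩ A) ∩ A ⊆ s.2.2.2) ∧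
  (s.2.2.1 ×ˢ s.2.2.2 ⊆ NRel O)

/-- Linking condition between consecutive stages: hull absorption. -/
def ConvLink (A A' : Set E) (s s' : Set E × Set E × Set E × Set E) : Prop :=
  (incHull (s.1 ∩ A) ∩ A' ⊆ s'.1) ∧ (decHull (s.2.1 ∩ A) ∩ A' ⊆ s'.2.1)

lemma conv_step (hG : IsClosed {p : E × E | p.1 ≤ p.2}) {O : Set E} (hO : IsOpen O)
    (hconv : IsOrdConvex O) {x : E} (hxO : x ∈ O)
    {A A' : Set E} (hA : IsCompact A) (hA' : IsCompact A') (hAA' : A ⊆ A') (hxA : x ∈ A)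
    {s : Set E × Set E × Set E × Set E} (hs : ConvGood O x A s) :
    ∃ s', ConvGood O x A' s' ∧ ConvLink A A' s s' := by
  obtain ⟨hoV, hoU, hoΩV, hoΩU, hxV, hxU, hclV, hclU, hpair⟩ := hs
  set Z : Set E := s.1 ∩ A with hZdef
  set Uc : Set E := s.2.1 ∩ A with hUdef
  have hCZ : IsCompact (closure Z ∩ A) := hA.inter_left isClosed_closure
  have hCU : IsCompact (closure Uc ∩ A) := hA.inter_left isClosed_closure
  set SV : Set E := incHull (closure Z ∩ A) ∩ A' with hSVdef
  set SU : Set E := decHull (closure Uc ∩ A) ∩ A' with hSUdef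
  have hSV : IsCompact SV := isCompact_incHull_inter hG hCZ hA'
  have hSU : IsCompact SU := isCompact_decHull_inter hG hCU hA'
  -- Claim 1 : SV ×ˢ SU ⊆ NRel O
  have hclaim : SV ×ˢ SU ⊆ NRel O := by
    rintro ⟨ζ, υ⟩ ⟨⟨⟨z, hz, hzζ⟩, hζA'⟩, ⟨⟨u, hu, hυu⟩, hυA'⟩⟩ hle
    have hzΩ : z ∈ s.2.2.1 := hclV hz
    have huΩ : u ∈ s.2.2.2 := hclU hu
    have hzu : z ∈ O ∧ u ∈ O :=
      hpair (Set.mk_mem_prod hzΩ huΩ) (le_trans hzζ (le_trans hle hυu))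
    constructor
    · have hζmem : ζ ∈ decHull O ∩ incHull O :=
        ⟨⟨u, hzu.2, le_trans hle hυu⟩, ⟨z, hzu.1, hzζ⟩⟩
      rw [hconv] at hζmem
      exact hζmem
    · have hυmem : υ ∈ decHull O ∩ incHull O :=
        ⟨⟨u, hzu.2, hυu⟩, ⟨z, hzu.1, le_trans hzζ hle⟩⟩
      rw [hconv] at hυmem
      exact hυmem
  obtain ⟨WV, WU, hWVo, hWUo, hSVW, hSUW, hWsub⟩ :=
    generalized_tube_lemma hSV hSU (isOpen_NRel hG hO) hclaim
  -- collar for V side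
  have hcolV : ∀ p ∈ SV, ∀ q ∈ A', q ∉ WV → (p, q) ∉ {p : E × E | p.1 ≤ p.2} := by
    rintro p ⟨⟨z, hz, hzp⟩, _⟩ q hq hqW hpq
    exact hqW (hSVW ⟨⟨z, hz, le_trans hzp hpq⟩, hq⟩)
  obtain ⟨ΘV', hΘV'o, hSVΘ, hΘV'cl⟩ :=
    collar_of_tube hG (fun z => le_refl z) hA' hSV hWVo hcolV
  -- collar for U side
  have hG' : IsClosed {p : E × E | p.2 ≤ p.1} := by
    have : {p : E × E | p.2 ≤ p.1} = Prod.swap ⁻¹' {p : E × E | p.1 ≤ p.2} := rfl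
    rw [this]
    exact hG.preimage continuous_swap
  have hcolU : ∀ p ∈ SU, ∀ q ∈ A', q ∉ WU → (p, q) ∉ {p : E × E | p.2 ≤ p.1} := by
    rintro p ⟨⟨u, hu, hpu⟩, _⟩ q hq hqW hpq
    exact hqW (hSUW ⟨⟨u, hu, le_trans hpq hpu⟩, hq⟩)
  obtain ⟨ΘU', hΘU'o, hSUΘ, hΘU'cl⟩ :=
    collar_of_tube hG' (fun z => le_refl z) hA' hSU hWUo hcolU
  refine ⟨(ΘV', ΘU', WV, WU), ⟨hΘV'o, hΘU'o, hWVo, hWUo, ?_, ?_, ?_, ?_, hWsub⟩, ?_, ?_⟩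
  · -- x ∈ ΘV'
    exact hSVΘ ⟨⟨x, ⟨subset_closure ⟨hxV, hxA⟩, hxA⟩, le_refl x⟩, hAA' hxA⟩
  · exact hSUΘ ⟨⟨x, ⟨subset_closure ⟨hxU, hxA⟩, hxA⟩, le_refl x⟩, hAA' hxA⟩
  · -- closure (ΘV' ∩ A') ∩ A' ⊆ WV
    rintro y ⟨hy1, hy2⟩
    exact hΘV'cl ⟨closure_mono Set.inter_subset_left hy1, hy2⟩
  · rintro y ⟨hy1, hy2⟩
    exact hΘU'cl ⟨closure_mono Set.inter_subset_left hy1, hy2⟩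
  · -- link V
    rintro y ⟨⟨z, hz, hzy⟩, hyA'⟩
    exact hSVΘ ⟨⟨z, ⟨subset_closure hz, hz.2⟩, hzy⟩, hyA'⟩
  · rintro y ⟨⟨z, hz, hzy⟩, hyA'⟩
    exact hSUΘ ⟨⟨z, ⟨subset_closure hz, hz.2⟩, hzy⟩, hyA'⟩

end Aux

/-- In a closed preordered `k_ω`-space, every open convex neighborhood `O` of a
point `x` contains `U ∩ V ∋ x` with `U` open decreasing and `V` open increasing. -/
theorem convex_at_of_weaklyConvex_at {E : Type*} [TopologicalSpace E] [Preorder E]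
    (hG : IsClosed {p : E × E | p.1 ≤ p.2})
    (hkw : IsKOmegaSpace E)
    (x : E) (O : Set E) (hO : IsOpen O) (hxO : x ∈ O) (hOconv : IsOrdConvex O) :
    ∃ U V : Set E, IsOpen U ∧ decHull U = U ∧ IsOpen V ∧ incHull V = V ∧
      x ∈ U ∩ V ∧ U ∩ V ⊆ O := by
  classical
  obtain ⟨K, hKc, hKmono, hKcover, hKopen⟩ := hkw
  -- the modified exhaustion containing x
  set L : ℕ → Set E := fun n => insert x (K n) with hLdef
  have hLc : ∀ n, IsCompact (L n) := fun n => (hKc n).insert x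
  have hKchain : ∀ {n m : ℕ}, n ≤ m → K n ⊆ K m := by
    intro n m h
    induction h with
    | refl => exact le_refl _
    | step h ih => exact ih.trans (hKmono _)
  have hLchain : ∀ {n m : ℕ}, n ≤ m → L n ⊆ L m := by
    intro n m h
    exact Set.insert_subset_insert (hKchain h)
  have hxL : ∀ n, x ∈ L n := fun n => Set.mem_insert x (K n)
  have hLcover : ∀ y : E, ∃ n, y ∈ L n := by
    intro y
    have : y ∈ ⋃ n, K n := hKcover ▸ Set.mem_univ y
    obtain ⟨n, hn⟩ := Set.mem_iUnion.mp this
    exact ⟨n, Set.mem_insert_of_mem x hn⟩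
  have hLopen : ∀ S : Set E, IsOpen S ↔ ∀ n, IsOpen {y : L n | (y : E) ∈ S} := by
    intro S
    constructor
    · intro hS n
      exact hS.preimage continuous_subtype_val
    · intro h
      refine (hKopen S).mpr fun n => ?_
      have hsub : K n ⊆ L n := Set.subset_insert x (K n)
      have : {y : K n | (y : E) ∈ S} =
          (Set.inclusion hsub) ⁻¹' {y : L n | (y : E) ∈ S} := rfl
      rw [this]
      exact (h n).preimage (continuous_inclusion hsub)
  -- base data on {x}
  have hxx : ((x, x) : E × E) ∈ NRel O := fun _ => ⟨hxO, hxO⟩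
  obtain ⟨u0, v0, hu0, hv0, hxu0, hxv0, huv0⟩ :=
    generalized_tube_lemma (isCompact_singleton : IsCompact ({x} : Set E))
      (isCompact_singleton : IsCompact ({x} : Set E))
      (isOpen_NRel hG hO) (by
        rintro ⟨a, b⟩ ⟨ha, hb⟩
        rw [Set.mem_singleton_iff] at ha hb
        exact fun _ => ⟨ha.symm ▸ hxO, hb.symm ▸ hxO⟩)
  have hbase : ConvGood O x ({x} : Set E) (Set.univ, Set.univ, u0, v0) := by
    refine ⟨isOpen_univ, isOpen_univ, hu0, hv0, Set.mem_univ x, Set.mem_univ x, ?_, ?_, ?_⟩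
    · rintro y ⟨_, hy⟩
      rcases hy with rfl
      exact hxu0 rfl
    · rintro y ⟨_, hy⟩
      rcases hy with rfl
      exact hxv0 rfl
    · rintro ⟨a, b⟩ ⟨ha, hb⟩
      exact huv0 (Set.mk_mem_prod ha hb)
  obtain ⟨s0, hs0, _⟩ := conv_step hG hO hOconv hxO isCompact_singleton (hLc 0)
    (Set.singleton_subset_iff.mpr (hxL 0)) rfl hbase
  -- the recursive step function
  have step' : ∀ n (s : Set E × Set E × Set E × Set E), ConvGood O x (L n) s →
      ∃ s', ConvGood O x (L (n+1)) s' ∧ ConvLink (L n) (L (n+1)) s s' := by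
    intro n s hs
    exact conv_step hG hO hOconv hxO (hLc n) (hLc (n+1))
      (hLchain (Nat.le_succ n)) (hxL n) hs
  choose! F hF using step'
  obtain ⟨seq, hseq0, hseqS⟩ :
      ∃ seq : ℕ → Set E × Set E × Set E × Set E,
        seq 0 = s0 ∧ ∀ n, seq (n+1) = F n (seq n) :=
    ⟨fun n => Nat.rec s0 (fun k s => F k s) n, rfl, fun n => rfl⟩
  have hgood : ∀ n, ConvGood O x (L n) (seq n) := by
    intro n
    induction n with
    | zero => rw [hseq0]; exact hs0
    | succ k ih => rw [hseqS k]; exact (hF k (seq k) ih).1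
  have hlink : ∀ n, ConvLink (L n) (L (n+1)) (seq n) (seq (n+1)) := by
    intro n
    rw [hseqS n]
    exact (hF n (seq n) (hgood n)).2
  -- zones
  set ZV : ℕ → Set E := fun n => (seq n).1 ∩ L n with hZVdef
  set ZU : ℕ → Set E := fun n => (seq n).2.1 ∩ L n with hZUdef
  have hchainV : ∀ {n m : ℕ}, n ≤ m → ZV n ⊆ ZV m := by
    intro n m h
    induction h with
    | refl => exact le_refl _
    | @step m h ih =>
      refine ih.trans ?_
      intro z hz
      exact ⟨(hlink m).1 ⟨⟨z, hz, le_refl z⟩, hLchain (Nat.le_succ m) hz.2⟩,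
        hLchain (Nat.le_succ m) hz.2⟩
  have hchainU : ∀ {n m : ℕ}, n ≤ m → ZU n ⊆ ZU m := by
    intro n m h
    induction h with
    | refl => exact le_refl _
    | @step m h ih =>
      refine ih.trans ?_
      intro z hz
      exact ⟨(hlink m).2 ⟨⟨z, hz, le_refl z⟩, hLchain (Nat.le_succ m) hz.2⟩,
        hLchain (Nat.le_succ m) hz.2⟩
  have habsV : ∀ n m, n < m → incHull (ZV n) ∩ L m ⊆ ZV m := by
    intro n m h
    induction m with
    | zero => omega
    | succ k ih =>
      rcases Nat.lt_succ_iff_lt_or_eq.mp h with h' | h'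
      · rintro y ⟨hy1, hy2⟩
        have : y ∈ incHull (ZV k) ∩ L (k+1) :=
          ⟨incHull_mono (hchainV (Nat.le_of_lt h')) hy1, hy2⟩
        exact ⟨(hlink k).1 ⟨this.1, this.2⟩, this.2⟩
      · subst h'
        rintro y ⟨hy1, hy2⟩
        exact ⟨(hlink n).1 ⟨hy1, hy2⟩, hy2⟩
  have habsU : ∀ n m, n < m → decHull (ZU n) ∩ L m ⊆ ZU m := by
    intro n m h
    induction m with
    | zero => omega
    | succ k ih =>
      rcases Nat.lt_succ_iff_lt_or_eq.mp h with h' | h'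
      · rintro y ⟨hy1, hy2⟩
        have : y ∈ decHull (ZU k) ∩ L (k+1) :=
          ⟨decHull_mono (hchainU (Nat.le_of_lt h')) hy1, hy2⟩
        exact ⟨(hlink k).2 ⟨this.1, this.2⟩, this.2⟩
      · subst h'
        rintro y ⟨hy1, hy2⟩
        exact ⟨(hlink n).2 ⟨hy1, hy2⟩, hy2⟩
  set V : Set E := ⋃ n, ZV n with hVdef
  set U : Set E := ⋃ n, ZU n with hUdef
  -- openness
  have hVopen : IsOpen V := by
    refine (hLopen V).mpr fun m => ?_
    have heq : {y : L m | (y : E) ∈ V} =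
        ⋃ k : ℕ, {y : L m | (y : E) ∈ (seq (m + k)).1} := by
      ext y
      simp only [Set.mem_setOf_eq, Set.mem_iUnion]
      constructor
      · intro hy
        obtain ⟨j, hj⟩ := Set.mem_iUnion.mp hy
        rcases le_or_gt j m with h | h
        · exact ⟨0, (hchainV h hj).1⟩
        · refine ⟨j - m, ?_⟩
          rw [Nat.add_sub_cancel' h.le]
          exact hj.1
      · rintro ⟨k, hk⟩
        exact Set.mem_iUnion.mpr ⟨m + k, hk, hLchain (Nat.le_add_right m k) y.2⟩
    rw [heq]
    exact isOpen_iUnion fun k => ((hgood (m + k)).1).preimage continuous_subtype_val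
  have hUopen : IsOpen U := by
    refine (hLopen U).mpr fun m => ?_
    have heq : {y : L m | (y : E) ∈ U} =
        ⋃ k : ℕ, {y : L m | (y : E) ∈ (seq (m + k)).2.1} := by
      ext y
      simp only [Set.mem_setOf_eq, Set.mem_iUnion]
      constructor
      · intro hy
        obtain ⟨j, hj⟩ := Set.mem_iUnion.mp hy
        rcases le_or_gt j m with h | h
        · exact ⟨0, (hchainU h hj).1⟩
        · refine ⟨j - m, ?_⟩
          rw [Nat.add_sub_cancel' h.le]
          exact hj.1
      · rintro ⟨k, hk⟩
        exact Set.mem_iUnion.mpr ⟨m + k, hk, hLchain (Nat.le_add_right m k) y.2⟩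
    rw [heq]
    exact isOpen_iUnion fun k => ((hgood (m + k)).2.1).preimage continuous_subtype_val
  -- hull equalities
  have hVinc : incHull V = V := by
    refine Set.Subset.antisymm ?_ (subset_incHull V)
    rintro y ⟨v, hv, hvy⟩
    obtain ⟨n, hn⟩ := Set.mem_iUnion.mp hv
    obtain ⟨m0, hym0⟩ := hLcover y
    have hm : n < max (n+1) m0 := lt_of_lt_of_le (Nat.lt_succ_self n) (le_max_left _ _)
    have hyL : y ∈ L (max (n+1) m0) := hLchain (le_max_right _ _) hym0
    exact Set.mem_iUnion.mpr ⟨max (n+1) m0, habsV n _ hm ⟨⟨v, hn, hvy⟩, hyL⟩⟩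
  have hUdec : decHull U = U := by
    refine Set.Subset.antisymm ?_ (subset_decHull U)
    rintro y ⟨v, hv, hvy⟩
    obtain ⟨n, hn⟩ := Set.mem_iUnion.mp hv
    obtain ⟨m0, hym0⟩ := hLcover y
    have hm : n < max (n+1) m0 := lt_of_lt_of_le (Nat.lt_succ_self n) (le_max_left _ _)
    have hyL : y ∈ L (max (n+1) m0) := hLchain (le_max_right _ _) hym0
    exact Set.mem_iUnion.mpr ⟨max (n+1) m0, habsU n _ hm ⟨⟨v, hn, hvy⟩, hyL⟩⟩
  -- membership of x
  have hxV : x ∈ V := Set.mem_iUnion.mpr ⟨0, (hgood 0).2.2.2.2.1, hxL 0⟩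
  have hxU : x ∈ U := Set.mem_iUnion.mpr ⟨0, (hgood 0).2.2.2.2.2.1, hxL 0⟩
  -- U ∩ V ⊆ O
  have hUV : U ∩ V ⊆ O := by
    rintro z ⟨hzU, hzV⟩
    obtain ⟨n, hn⟩ := Set.mem_iUnion.mp hzU
    obtain ⟨m, hm⟩ := Set.mem_iUnion.mp hzV
    set N := max n m with hN
    have hzUN : z ∈ ZU N := hchainU (le_max_left n m) hn
    have hzVN : z ∈ ZV N := hchainV (le_max_right n m) hm
    have h1 : z ∈ (seq N).2.2.1 :=
      (hgood N).2.2.2.2.2.2.1 ⟨subset_closure hzVN, hzVN.2⟩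
    have h2 : z ∈ (seq N).2.2.2 :=
      (hgood N).2.2.2.2.2.2.2.1 ⟨subset_closure hzUN, hzUN.2⟩
    exact ((hgood N).2.2.2.2.2.2.2.2 (Set.mk_mem_prod h1 h2) (le_refl z)).1
  exact ⟨U, V, hUopen, hUdec, hVopen, hVinc, ⟨hxU, hxV⟩, hUV⟩
end
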